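/- If the offspring distribution ν has mean m = 1 and ν(0) > 0, then the Galton–Watson process started from one individual dies out almost surely: P^1(τ = ∞) = 0. -/

import Mathlib

open MeasureTheory ProbabilityTheory Filter
open scoped ENNReal

/-- Convolution of two measures on `ℕ`. -/
noncomputable def mconv (μ ν : Measure ℕ) : Measure ℕ :=
  Measure.map (fun p : ℕ × ℕ => p.1 + p.2) (μ.prod ν)

/-- `i`-fold convolution power of a measure on `ℕ`. -/
noncomputable def convPow (ν : Measure ℕ) : ℕ → Measure ℕ
  | 0 => Measure.dirac 0
  | n + 1 => mconv (convPow ν n) ν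

/-- Transition probabilities of a Galton–Watson chain. -/
noncomputable def gwStep (ν : Measure ℕ) (i j : ℕ) : ℝ≥0∞ :=
  if i = 0 then (if j = 0 then 1 else 0) else convPow ν i {j}

/-- `(Y n)` is a Galton–Watson process under `P` with offspring distribution `ν`
and initial distribution `μ0`, characterized by its finite-dimensional
distributions. -/
def IsGW {Ω : Type*} [MeasurableSpace Ω] (P : Measure Ω)
    (Y : ℕ → Ω → ℕ) (ν μ0 : Measure ℕ) : Prop :=
  Measure.map (Y 0) P = μ0 ∧
  ∀ n : ℕ, ∀ a : ℕ → ℕ,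
    P {ω | ∀ k ≤ n, Y k ω = a k} =
      μ0 {a 0} * ∏ k ∈ Finset.range n, gwStep ν (a k) (a (k + 1))

noncomputable def Fgen (ν : Measure ℕ) (s : ℝ≥0∞) : ℝ≥0∞ := ∑' k, ν {k} * s ^ k

lemma tsum_singletons (μ : Measure ℕ) : ∑' k, μ {k} = μ Set.univ := by
  rw [← measure_iUnion (fun i j h => by simpa using h) (fun i => measurableSet_singleton i)]
  simp [Set.iUnion_of_singleton]

lemma Fgen_mono (ν : Measure ℕ) : Monotone (Fgen ν) := fun s s' h =>
  ENNReal.tsum_le_tsum fun k => mul_le_mul_right (pow_le_pow_left' h k) _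

lemma Fgen_one (ν : Measure ℕ) [IsProbabilityMeasure ν] : Fgen ν 1 = 1 := by
  simp [Fgen, tsum_singletons]

lemma Fgen_le_one (ν : Measure ℕ) [IsProbabilityMeasure ν] {s : ℝ≥0∞} (hs : s ≤ 1) :
    Fgen ν s ≤ 1 := le_trans (Fgen_mono ν hs) (Fgen_one ν).le

instance mconv_prob (μ ρ : Measure ℕ) [IsProbabilityMeasure μ] [IsProbabilityMeasure ρ] :
    IsProbabilityMeasure (mconv μ ρ) := by
  constructor
  rw [mconv, Measure.map_apply (measurable_of_countable _) MeasurableSet.univ]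
  simp

instance convPow_prob (ν : Measure ℕ) [IsProbabilityMeasure ν] (i : ℕ) :
    IsProbabilityMeasure (convPow ν i) := by
  induction i with
  | zero => exact ⟨by simp [convPow]⟩
  | succ n ih => exact mconv_prob _ _

lemma gen_mconv (μ ρ : Measure ℕ) [IsProbabilityMeasure μ] [IsProbabilityMeasure ρ] (s : ℝ≥0∞) :
    ∑' j, mconv μ ρ {j} * s ^ j = (∑' j, μ {j} * s ^ j) * (∑' j, ρ {j} * s ^ j) := by
  have h1 : ∀ (m : Measure ℕ), ∑' j, m {j} * s ^ j = ∫⁻ j, s ^ j ∂m := by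
    intro m; rw [lintegral_countable']; congr 1; ext j; rw [mul_comm]
  rw [h1, h1, h1, mconv, lintegral_map (measurable_of_countable _) (measurable_of_countable _),
    lintegral_prod _ (measurable_of_countable _).aemeasurable]
  show (∫⁻ x, ∫⁻ y, s ^ (x + y) ∂ρ ∂μ) = _
  simp_rw [pow_add]
  rw [lintegral_lintegral_mul (measurable_of_countable _).aemeasurable
    (measurable_of_countable _).aemeasurable]

lemma gen_convPow (ν : Measure ℕ) [IsProbabilityMeasure ν] (i : ℕ) (s : ℝ≥0∞) :
    ∑' j, convPow ν i {j} * s ^ j = (Fgen ν s) ^ i := by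
  induction i with
  | zero =>
      simp only [convPow, pow_zero]
      rw [tsum_eq_single 0 (by intro b hb; simp [Measure.dirac_apply' _ (measurableSet_singleton _), Set.indicator, hb.symm])]
      simp [Measure.dirac_apply' _ (measurableSet_singleton _)]
  | succ n ih =>
      rw [convPow, gen_mconv, ih, pow_succ, Fgen]

-- 1 - s^k ≤ k (1-s)
lemma one_sub_pow_le {s : ℝ≥0∞} (hs : s ≤ 1) (k : ℕ) : 1 - s ^ k ≤ k * (1 - s) := by
  induction k with
  | zero => simp
  | succ k ih =>
      have hsk : s ^ (k+1) ≤ s := by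
        calc s ^ (k+1) = s * s ^ k := by ring
        _ ≤ s * 1 := by gcongr; exact pow_le_one' hs k
        _ = s := by ring
      have hs1 : s ^ (k+1) ≤ 1 := pow_le_one' hs _
      have split : 1 - s ^ (k+1) = (1 - s) + (s - s ^ (k+1)) := by
        rw [tsub_add_tsub_cancel hs hsk]
      have hfac : s - s ^ (k+1) = s * (1 - s ^ k) := by
        rw [ENNReal.mul_sub (fun _ _ => (lt_of_le_of_lt hs ENNReal.one_lt_top).ne), mul_one, pow_succ, mul_comm]
      have : s - s ^ (k+1) ≤ 1 - s ^ k := by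
        rw [hfac]
        calc s * (1 - s ^ k) ≤ 1 * (1 - s ^ k) := by gcongr
        _ = 1 - s ^ k := one_mul _
      calc 1 - s ^ (k+1) = (1 - s) + (s - s ^ (k+1)) := split
      _ ≤ (1 - s) + k * (1 - s) := by gcongr; exact this.trans ih
      _ = (k + 1 : ℕ) * (1 - s) := by push_cast; ring

lemma one_sub_pow_lt {s : ℝ≥0∞} (hs : s < 1) {k : ℕ} (hk : 2 ≤ k) :
    1 - s ^ k < k * (1 - s) := by
  obtain ⟨m, rfl⟩ : ∃ m, k = m + 2 := ⟨k - 2, by omega⟩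
  have hs1 : s ≤ 1 := hs.le
  have hne : (1 : ℝ≥0∞) - s ≠ 0 := by
    simpa [tsub_eq_zero_iff_le] using not_le.mpr hs
  have hnt : (1 : ℝ≥0∞) - s ≠ ⊤ := by
    exact (tsub_le_self.trans_lt ENNReal.one_lt_top).ne
  have hs2 : s ^ 2 ≤ 1 := pow_le_one' hs1 _
  have hsm2 : s ^ (m + 2) ≤ s ^ 2 := pow_le_pow_right_of_le_one' hs1 (by omega)
  have split : 1 - s ^ (m+2) = (1 - s ^ 2) + (s ^ 2 - s ^ (m+2)) := by
    rw [tsub_add_tsub_cancel hs2 hsm2]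
  have hsne : s ≠ ⊤ := (hs.trans ENNReal.one_lt_top).ne
  have hss : s * s ≤ s := by
    calc s * s ≤ s * 1 := by gcongr
    _ = s := mul_one s
  have h1 : 1 - s ^ 2 < 2 * (1 - s) := by
    have e : (1 + s) * (1 - s) = 1 - s ^ 2 := by
      rw [add_mul, one_mul, ENNReal.mul_sub (fun _ _ => hsne), mul_one,
        tsub_add_tsub_cancel hs1 hss, sq]
    rw [← e]
    refine ENNReal.mul_lt_mul_left hne hnt ?_
    have := ENNReal.add_lt_add_left (show (1:ℝ≥0∞) ≠ ⊤ by simp) hs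
    rw [one_add_one_eq_two] at this
    exact this
  have h2 : s ^ 2 - s ^ (m+2) ≤ m * (1 - s) := by
    have hfac : s ^ 2 - s ^ (m+2) = s ^ 2 * (1 - s ^ m) := by
      rw [ENNReal.mul_sub (fun _ _ => (lt_of_le_of_lt hs2 ENNReal.one_lt_top).ne), mul_one]
      congr 1; ring
    rw [hfac]
    calc s ^ 2 * (1 - s ^ m) ≤ 1 * (1 - s ^ m) := by gcongr
    _ = 1 - s ^ m := one_mul _
    _ ≤ m * (1 - s) := one_sub_pow_le hs1 m
  calc 1 - s ^ (m+2) = (1 - s ^ 2) + (s ^ 2 - s ^ (m+2)) := split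
  _ < 2 * (1 - s) + m * (1 - s) := ENNReal.add_lt_add_of_lt_of_le (by
      exact (h2.trans_lt (by
        refine ENNReal.mul_lt_top (by simp) ?_
        exact lt_of_le_of_ne le_top hnt)).ne) h1 h2
  _ = (↑(m + 2) : ℝ≥0∞) * (1 - s) := by push_cast; ring

lemma exists_big (ν : Measure ℕ) [IsProbabilityMeasure ν]
    (hm : ∑' k : ℕ, (k : ℝ≥0∞) * ν {k} = 1) (h0 : 0 < ν {0}) :
    ∃ k, 2 ≤ k ∧ ν {k} ≠ 0 := by
  by_contra h
  push_neg at h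
  have h1 : ∑' k : ℕ, (k : ℝ≥0∞) * ν {k} = ν {1} := by
    rw [tsum_eq_single 1]
    · simp
    · intro b hb
      rcases Nat.lt_or_ge b 2 with hb2 | hb2
      · interval_cases b <;> simp_all
      · rw [h b hb2, mul_zero]
  have h2 : ν {1} = 1 := h1 ▸ hm
  have h3 : ν {0} + ν {1} ≤ ∑' k, ν {k} := by
    have := ENNReal.sum_le_tsum (f := fun k => ν {k}) ({0,1} : Finset ℕ)
    simpa using this
  rw [tsum_singletons, measure_univ, h2] at h3
  have h4 : (1:ℝ≥0∞) < 1 + ν {0} := ENNReal.lt_add_right ENNReal.one_ne_top h0.ne'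
  rw [add_comm] at h3
  exact absurd (h4.trans_le h3) (by simp)

lemma lt_Fgen (ν : Measure ℕ) [IsProbabilityMeasure ν]
    (hm : ∑' k : ℕ, (k : ℝ≥0∞) * ν {k} = 1) (h0 : 0 < ν {0})
    {s : ℝ≥0∞} (hs : s < 1) : s < Fgen ν s := by
  obtain ⟨k0, hk0, hpk0⟩ := exists_big ν hm h0
  have hs1 : s ≤ 1 := hs.le
  have hkey : (1:ℝ≥0∞) - Fgen ν s < 1 - s := by
    have hsum1 : ∑' k, ν {k} = 1 := by rw [tsum_singletons, measure_univ]
    have e1 : (1:ℝ≥0∞) - Fgen ν s = ∑' k, ν {k} * (1 - s ^ k) := by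
      have h2 := ENNReal.tsum_sub (f := fun k => ν {k}) (g := fun k => ν {k} * s ^ k)
        (by
          refine ne_top_of_le_ne_top ENNReal.one_ne_top ?_
          exact (Fgen_le_one ν hs1))
        (fun k => by
          calc ν {k} * s ^ k ≤ ν {k} * 1 := by gcongr; exact pow_le_one' hs1 k
          _ = ν {k} := mul_one _)
      rw [hsum1] at h2
      unfold Fgen
      rw [← h2]
      congr 1
      ext k
      rw [ENNReal.mul_sub (fun _ _ => measure_ne_top ν _), mul_one]
    have e2 : ∑' k : ℕ, ν {k} * ((k : ℝ≥0∞) * (1 - s)) = 1 - s := by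
      have : ∀ k : ℕ, ν {k} * ((k : ℝ≥0∞) * (1 - s)) = ((k : ℝ≥0∞) * ν {k}) * (1 - s) := by
        intro k; ring
      simp_rw [this]
      rw [ENNReal.tsum_mul_right, hm, one_mul]
    rw [e1, ← e2]
    refine ENNReal.tsum_lt_tsum (i := k0) ?_ ?_ ?_
    · refine ne_top_of_le_ne_top ENNReal.one_ne_top ?_
      calc ∑' k, ν {k} * (1 - s ^ k) ≤ ∑' k, ν {k} := by
            gcongr with k
            calc ν {k} * (1 - s ^ k) ≤ ν {k} * 1 := by gcongr; exact tsub_le_self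
            _ = ν {k} := mul_one _
      _ = 1 := by rw [tsum_singletons, measure_univ]
    · intro k
      exact mul_le_mul_right (one_sub_pow_le hs1 k) _
    · exact ENNReal.mul_lt_mul_right hpk0 (measure_ne_top ν _) (one_sub_pow_lt hs hk0)
  by_contra hc
  push_neg at hc
  exact absurd (tsub_le_tsub_left hc 1) hkey.not_ge

lemma iSup_iter (ν : Measure ℕ) [IsProbabilityMeasure ν]
    (hm : ∑' k : ℕ, (k : ℝ≥0∞) * ν {k} = 1) (h0 : 0 < ν {0}) :
    ⨆ n, (Fgen ν)^[n] 0 = 1 := by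
  set t : ℕ → ℝ≥0∞ := fun n => (Fgen ν)^[n] 0 with ht
  have hsucc : ∀ n, t (n + 1) = Fgen ν (t n) := fun n =>
    Function.iterate_succ_apply' _ _ _
  have ht_le : ∀ n, t n ≤ 1 := by
    intro n
    induction n with
    | zero => simp [ht]
    | succ n ih => rw [hsucc]; exact Fgen_le_one ν ih
  have hmono : Monotone t := by
    refine monotone_nat_of_le_succ ?_
    intro n
    induction n with
    | zero => exact zero_le
    | succ n ih => rw [hsucc, hsucc]; exact Fgen_mono ν ih
  set L := ⨆ n, t n with hL
  have hL1 : L ≤ 1 := iSup_le ht_le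
  have htend : Tendsto t atTop (nhds L) := tendsto_atTop_iSup hmono
  have hterm : ∀ k : ℕ, ν {k} * L ^ k = ⨆ n, ν {k} * (t n) ^ k := by
    intro k
    have cont : Continuous fun x : ℝ≥0∞ => ν {k} * x ^ k :=
      (ENNReal.continuous_const_mul (measure_ne_top ν _)).comp (ENNReal.continuous_pow k)
    have h1 : Tendsto (fun n => ν {k} * (t n) ^ k) atTop (nhds (ν {k} * L ^ k)) :=
      (cont.tendsto L).comp htend
    have h2 : Tendsto (fun n => ν {k} * (t n) ^ k) atTop
        (nhds (⨆ n, ν {k} * (t n) ^ k)) :=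
      tendsto_atTop_iSup (fun a b hab => by gcongr; exact hmono hab)
    exact tendsto_nhds_unique h1 h2
  have hmct : Fgen ν L = ⨆ n, Fgen ν (t n) := by
    calc Fgen ν L = ∑' k, ⨆ n, ν {k} * (t n) ^ k := by
          unfold Fgen; exact tsum_congr hterm
    _ = ∫⁻ k, (⨆ n, ν {k} * (t n) ^ k) ∂(Measure.count) := (lintegral_count _).symm
    _ = ⨆ n, ∫⁻ k, ν {k} * (t n) ^ k ∂(Measure.count) := by
          refine lintegral_iSup (fun n => measurable_of_countable _) ?_
          intro a b hab k
          exact mul_le_mul_right (pow_le_pow_left' (hmono hab) k) _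
    _ = ⨆ n, Fgen ν (t n) := by simp [lintegral_count, Fgen]
  have hshift : (⨆ n, Fgen ν (t n)) = L := by
    refine le_antisymm (iSup_le fun n => ?_) (iSup_le fun n => ?_)
    · rw [← hsucc]; exact le_iSup t (n + 1)
    · exact le_trans (hmono (Nat.le_succ n))
        (by rw [hsucc]; exact le_iSup (fun n => Fgen ν (t n)) n)
  have hfix : Fgen ν L = L := hmct.trans hshift
  rcases lt_or_eq_of_le hL1 with hlt | heq
  · exact absurd hfix.le (lt_Fgen ν hm h0 hlt).not_ge
  · exact heq

noncomputable def Apath (ν : Measure ℕ) : ℕ → ℕ+ → ℝ≥0∞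
  | 0 => fun j => if j = 1 then 1 else 0
  | n + 1 => fun j => ∑' i : ℕ+, Apath ν n i * convPow ν (i : ℕ) {(j : ℕ)}

noncomputable def Wt (ν : Measure ℕ) (n : ℕ) (v : Fin (n + 1) → ℕ+) : ℝ≥0∞ :=
  (if v 0 = 1 then 1 else 0) *
    ∏ k : Fin n, convPow ν (v k.castSucc : ℕ) {(v k.succ : ℕ)}

lemma Wt_snoc (ν : Measure ℕ) (n : ℕ) (w : Fin (n + 1) → ℕ+) (x : ℕ+) :
    Wt ν (n + 1) (Fin.snoc w x) =
      Wt ν n w * convPow ν (w (Fin.last n) : ℕ) {(x : ℕ)} := by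
  unfold Wt
  rw [Fin.prod_univ_castSucc]
  have h0 : (Fin.snoc w x : Fin (n + 2) → ℕ+) 0 = w 0 := by
    rw [show (0 : Fin (n + 2)) = Fin.castSucc 0 from rfl, Fin.snoc_castSucc]
  rw [h0, mul_assoc]
  congr 2
  · refine Finset.prod_congr rfl fun k _ => ?_
    rw [show (Fin.castSucc k).castSucc = Fin.castSucc k.castSucc from rfl,
      Fin.snoc_castSucc, Fin.succ_castSucc, Fin.snoc_castSucc]
  · rw [Fin.succ_last, Fin.snoc_last, Fin.snoc_castSucc]

lemma tuple_sum (ν : Measure ℕ) : ∀ (n : ℕ) (g : ℕ+ → ℝ≥0∞),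
    ∑' v : Fin (n + 1) → ℕ+, Wt ν n v * g (v (Fin.last n)) =
      ∑' j : ℕ+, Apath ν n j * g j := by
  intro n
  induction n with
  | zero =>
      intro g
      rw [← Equiv.tsum_eq (Equiv.funUnique (Fin 1) ℕ+).symm
        (fun v => Wt ν 0 v * g (v (Fin.last 0)))]
      refine tsum_congr fun j => ?_
      simp [Wt, Apath, Equiv.funUnique]
  | succ n ih =>
      intro g
      rw [← Equiv.tsum_eq (Fin.snocEquiv (fun _ : Fin (n + 2) => ℕ+))
        (fun v => Wt ν (n + 1) v * g (v (Fin.last (n + 1))))]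
      have key : ∀ p : ℕ+ × (Fin (n + 1) → ℕ+),
          Wt ν (n + 1) (Fin.snocEquiv (fun _ => ℕ+) p) *
            g ((Fin.snocEquiv (fun _ => ℕ+) p) (Fin.last (n + 1))) =
          Wt ν n p.2 * (convPow ν (p.2 (Fin.last n) : ℕ) {(p.1 : ℕ)} * g p.1) := by
        intro p
        have : (Fin.snocEquiv (fun _ : Fin (n+2) => ℕ+) p) = Fin.snoc p.2 p.1 := rfl
        rw [this, Wt_snoc, Fin.snoc_last, mul_assoc]
      rw [tsum_congr key, ENNReal.tsum_prod']
      rw [ENNReal.tsum_comm]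
      have inner : ∀ w : Fin (n + 1) → ℕ+,
          ∑' x : ℕ+, Wt ν n w * (convPow ν (w (Fin.last n) : ℕ) {(x : ℕ)} * g x) =
          Wt ν n w * ∑' x : ℕ+, convPow ν (w (Fin.last n) : ℕ) {(x : ℕ)} * g x :=
        fun w => ENNReal.tsum_mul_left
      rw [tsum_congr inner, ih (fun i => ∑' x : ℕ+, convPow ν (i : ℕ) {(x : ℕ)} * g x)]
      have e2 : ∀ j : ℕ+,
          Apath ν n j * (∑' x : ℕ+, convPow ν (j : ℕ) {(x : ℕ)} * g x) =
          ∑' x : ℕ+, Apath ν n j * convPow ν (j : ℕ) {(x : ℕ)} * g x := by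
        intro j
        rw [← ENNReal.tsum_mul_left]
        exact tsum_congr fun x => (mul_assoc _ _ _).symm
      rw [tsum_congr e2, ENNReal.tsum_comm]
      refine tsum_congr fun x => ?_
      rw [show Apath ν (n + 1) x = ∑' i : ℕ+, Apath ν n i * convPow ν (i : ℕ) {(x : ℕ)} from rfl,
        ENNReal.tsum_mul_right]

lemma convPow_pnat_mass (ν : Measure ℕ) [IsProbabilityMeasure ν] (i : ℕ) :
    ∑' j : ℕ+, convPow ν i {(j : ℕ)} ≤ 1 := by
  calc ∑' j : ℕ+, convPow ν i {(j : ℕ)}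
      ≤ ∑' j : ℕ, convPow ν i {j} :=
        ENNReal.tsum_comp_le_tsum_of_injective (fun a b h => PNat.coe_injective h) _
  _ = 1 := by rw [tsum_singletons, measure_univ]

lemma Apath_mass (ν : Measure ℕ) [IsProbabilityMeasure ν] :
    ∀ n, ∑' j : ℕ+, Apath ν n j ≤ 1 := by
  intro n
  induction n with
  | zero =>
      rw [show (fun j => Apath ν 0 j) = fun j : ℕ+ => if j = 1 then 1 else 0 from rfl]
      rw [tsum_eq_single 1 (fun b hb => by simp [hb])]
      simp
  | succ n ih =>
      calc ∑' j : ℕ+, Apath ν (n+1) j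
          = ∑' j : ℕ+, ∑' i : ℕ+, Apath ν n i * convPow ν (i : ℕ) {(j : ℕ)} := rfl
      _ = ∑' i : ℕ+, ∑' j : ℕ+, Apath ν n i * convPow ν (i : ℕ) {(j : ℕ)} := ENNReal.tsum_comm
      _ = ∑' i : ℕ+, Apath ν n i * ∑' j : ℕ+, convPow ν (i : ℕ) {(j : ℕ)} := by
            exact tsum_congr fun i => ENNReal.tsum_mul_left
      _ ≤ ∑' i : ℕ+, Apath ν n i * 1 := by
            gcongr with i
            exact convPow_pnat_mass ν i
      _ ≤ 1 := by simpa using ih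

lemma Apath_le_one (ν : Measure ℕ) [IsProbabilityMeasure ν] (n : ℕ) (j : ℕ+) :
    Apath ν n j ≤ 1 :=
  le_trans (ENNReal.le_tsum j) (Apath_mass ν n)

lemma gen_convPow_pnat (ν : Measure ℕ) [IsProbabilityMeasure ν] (i : ℕ) (s : ℝ≥0∞) :
    ∑' x : ℕ+, convPow ν i {(x : ℕ)} * s ^ (x : ℕ) =
      (Fgen ν s) ^ i - (Fgen ν 0) ^ i := by
  have h0 : (Fgen ν 0) ^ i = convPow ν i {0} := by
    rw [← gen_convPow ν i 0, tsum_eq_single 0 (fun b hb => by simp [hb])]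
    simp
  have hsplit := tsum_eq_zero_add' (f := fun j : ℕ => convPow ν i {j} * s ^ j)
    ENNReal.summable
  have hpn : ∑' x : ℕ+, convPow ν i {(x : ℕ)} * s ^ (x : ℕ)
      = ∑' n : ℕ, convPow ν i {n + 1} * s ^ (n + 1) := by
    rw [← Equiv.tsum_eq Equiv.pnatEquivNat.symm
      (fun x : ℕ+ => convPow ν i {(x : ℕ)} * s ^ (x : ℕ))]
    exact tsum_congr fun n => by simp [Nat.succPNat]
  rw [hpn]
  rw [gen_convPow ν i s] at hsplit
  have : ∑' n : ℕ, convPow ν i {n + 1} * s ^ (n + 1)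
      = (Fgen ν s) ^ i - convPow ν i {0} * s ^ 0 := by
    rw [hsplit, ENNReal.add_sub_cancel_left]
    refine ne_top_of_le_ne_top (measure_ne_top (convPow ν i) {0}) ?_
    calc convPow ν i {0} * s ^ 0 = convPow ν i {0} := by rw [pow_zero, mul_one]
    _ ≤ convPow ν i {0} := le_rfl
  rw [this, h0, pow_zero, mul_one]

lemma pnat_tsum_sub (f g : ℕ+ → ℝ≥0∞) (h1 : ∑' i, g i ≠ ⊤) (h2 : ∀ i, g i ≤ f i) :
    ∑' i, (f i - g i) = ∑' i, f i - ∑' i, g i := by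
  rw [← Equiv.tsum_eq Equiv.pnatEquivNat.symm (fun i => f i - g i),
    ← Equiv.tsum_eq Equiv.pnatEquivNat.symm f,
    ← Equiv.tsum_eq Equiv.pnatEquivNat.symm g]
  exact ENNReal.tsum_sub
    (by rwa [Equiv.tsum_eq Equiv.pnatEquivNat.symm g]) (fun n => h2 _)

lemma Fgen_iter_one (ν : Measure ℕ) [IsProbabilityMeasure ν] (n : ℕ) :
    (Fgen ν)^[n] 1 = 1 := by
  induction n with
  | zero => rfl
  | succ n ih => rw [Function.iterate_succ_apply', ih, Fgen_one]

lemma Fgen_iter_le_one (ν : Measure ℕ) [IsProbabilityMeasure ν] (n : ℕ) {s : ℝ≥0∞}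
    (hs : s ≤ 1) : (Fgen ν)^[n] s ≤ 1 := by
  induction n generalizing s with
  | zero => exact hs
  | succ n ih => rw [Function.iterate_succ_apply]; exact ih (Fgen_le_one ν hs)

lemma GA_eq (ν : Measure ℕ) [IsProbabilityMeasure ν] :
    ∀ n : ℕ, ∀ s : ℝ≥0∞, s ≤ 1 →
      ∑' j : ℕ+, Apath ν n j * s ^ (j : ℕ) = (Fgen ν)^[n] s - (Fgen ν)^[n] 0 := by
  intro n
  induction n with
  | zero =>
      intro s _
      rw [tsum_eq_single 1 (fun b hb => by simp [show Apath ν 0 b = 0 from if_neg hb])]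
      simp [show Apath ν 0 1 = 1 from rfl]
  | succ n ih =>
      intro s hs
      have hF0 : Fgen ν 0 ≤ 1 := Fgen_le_one ν zero_le_one
      have hFs : Fgen ν s ≤ 1 := Fgen_le_one ν hs
      have step1 : ∑' j : ℕ+, Apath ν (n+1) j * s ^ (j : ℕ)
          = ∑' i : ℕ+, Apath ν n i * ((Fgen ν s) ^ (i:ℕ) - (Fgen ν 0) ^ (i:ℕ)) := by
        calc ∑' j : ℕ+, Apath ν (n+1) j * s ^ (j : ℕ)
            = ∑' j : ℕ+, ∑' i : ℕ+, Apath ν n i * convPow ν (i:ℕ) {(j:ℕ)} * s ^ (j:ℕ) := by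
              refine tsum_congr fun j => ?_
              rw [show Apath ν (n+1) j = ∑' i : ℕ+, Apath ν n i * convPow ν (i:ℕ) {(j:ℕ)} from rfl,
                ENNReal.tsum_mul_right]
        _ = ∑' i : ℕ+, ∑' j : ℕ+, Apath ν n i * (convPow ν (i:ℕ) {(j:ℕ)} * s ^ (j:ℕ)) := by
              rw [ENNReal.tsum_comm]
              exact tsum_congr fun i => tsum_congr fun j => mul_assoc _ _ _
        _ = ∑' i : ℕ+, Apath ν n i * ∑' j : ℕ+, convPow ν (i:ℕ) {(j:ℕ)} * s ^ (j:ℕ) :=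
              tsum_congr fun i => ENNReal.tsum_mul_left
        _ = ∑' i : ℕ+, Apath ν n i * ((Fgen ν s) ^ (i:ℕ) - (Fgen ν 0) ^ (i:ℕ)) :=
              tsum_congr fun i => by rw [gen_convPow_pnat]
      have step2 : ∑' i : ℕ+, Apath ν n i * ((Fgen ν s) ^ (i:ℕ) - (Fgen ν 0) ^ (i:ℕ))
          = (∑' i : ℕ+, Apath ν n i * (Fgen ν s) ^ (i:ℕ))
            - ∑' i : ℕ+, Apath ν n i * (Fgen ν 0) ^ (i:ℕ) := by
        have hterm : ∀ i : ℕ+, Apath ν n i * ((Fgen ν s) ^ (i:ℕ) - (Fgen ν 0) ^ (i:ℕ))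
            = Apath ν n i * (Fgen ν s) ^ (i:ℕ) - Apath ν n i * (Fgen ν 0) ^ (i:ℕ) :=
          fun i => ENNReal.mul_sub fun _ _ =>
            ne_top_of_le_ne_top ENNReal.one_ne_top (Apath_le_one ν n i)
        rw [tsum_congr hterm]
        refine pnat_tsum_sub _ _ ?_ fun i => ?_
        · refine ne_top_of_le_ne_top ENNReal.one_ne_top ?_
          calc ∑' i : ℕ+, Apath ν n i * (Fgen ν 0) ^ (i:ℕ)
              ≤ ∑' i : ℕ+, Apath ν n i * 1 := by
                gcongr with i
                exact pow_le_one' hF0 _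
          _ ≤ 1 := by simpa using Apath_mass ν n
        · exact mul_le_mul_right (pow_le_pow_left' (Fgen_mono ν (zero_le : 0 ≤ s)) _) _
      rw [step1, step2, ih _ hFs, ih _ hF0,
        tsub_tsub_tsub_cancel_right ((Fgen_mono ν).iterate n (zero_le : 0 ≤ Fgen ν 0)),
        ← Function.iterate_succ_apply, ← Function.iterate_succ_apply]

/-- Critical Galton–Watson processes with `ν {0} > 0` die out almost surely. -/
theorem gw_critical_extinction {Ω : Type*} [MeasurableSpace Ω]
    (P : Measure Ω) [IsProbabilityMeasure P]
    (ν : Measure ℕ) [IsProbabilityMeasure ν]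
    (hm : ∑' k : ℕ, (k : ℝ≥0∞) * ν {k} = 1) (h0 : 0 < ν {0})
    (Y : ℕ → Ω → ℕ) (hY : IsGW P Y ν (Measure.dirac 1)) :
    P {ω | ∀ t : ℕ, Y t ω ≠ 0} = 0 := by
  obtain ⟨-, hfdd⟩ := hY
  have key : ∀ n : ℕ, P {ω | ∀ t : ℕ, Y t ω ≠ 0} ≤ 1 - (Fgen ν)^[n] 0 := by
    intro n
    set e : (Fin (n + 1) → ℕ+) → ℕ → ℕ :=
      fun v k => if h : k < n + 1 then (v ⟨k, h⟩ : ℕ) else 0 with he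
    have cover : {ω | ∀ t : ℕ, Y t ω ≠ 0} ⊆
        ⋃ v : Fin (n + 1) → ℕ+, {ω | ∀ k ≤ n, Y k ω = e v k} := by
      intro ω hω
      refine Set.mem_iUnion.mpr ⟨fun i => ⟨Y i ω, Nat.pos_of_ne_zero (hω i)⟩, ?_⟩
      intro k hk
      simp only [he]
      rw [dif_pos (Nat.lt_succ_of_le hk)]
      rfl
    have hcyl : ∀ v : Fin (n + 1) → ℕ+,
        P {ω | ∀ k ≤ n, Y k ω = e v k} = Wt ν n v := by
      intro v
      rw [hfdd n (e v)]
      have hee : ∀ (k : ℕ) (h : k < n + 1), e v k = (v ⟨k, h⟩ : ℕ) := by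
        intro k h; simp only [he]; rw [dif_pos h]
      have hd : (Measure.dirac 1 : Measure ℕ) {e v 0} =
          (if v 0 = 1 then 1 else 0 : ℝ≥0∞) := by
        rw [hee 0 n.succ_pos, Measure.dirac_apply' _ (measurableSet_singleton _)]
        simp only [Set.indicator_apply, Set.mem_singleton_iff, Pi.one_apply]
        by_cases hv : v 0 = 1
        · simp [hv]
        · rw [if_neg (fun hh => hv (PNat.coe_injective (by simpa using hh.symm))),
            if_neg (fun hh => hv (by simpa [eq_comm] using hh))]
      have hprod : ∏ k ∈ Finset.range n, gwStep ν (e v k) (e v (k + 1)) =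
          ∏ k : Fin n, convPow ν (v k.castSucc : ℕ) {(v k.succ : ℕ)} := by
        rw [← Fin.prod_univ_eq_prod_range (fun k => gwStep ν (e v k) (e v (k + 1))) n]
        refine Finset.prod_congr rfl fun k _ => ?_
        have h1 : (k : ℕ) < n + 1 := Nat.lt_succ_of_lt k.isLt
        have h2 : (k : ℕ) + 1 < n + 1 := Nat.succ_lt_succ k.isLt
        rw [hee _ h1, hee _ h2]
        have e1 : (⟨(k : ℕ), h1⟩ : Fin (n + 1)) = k.castSucc := rfl
        have e2 : (⟨(k : ℕ) + 1, h2⟩ : Fin (n + 1)) = k.succ := rfl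
        rw [e1, e2, gwStep, if_neg (v k.castSucc).pos.ne']
      rw [hd, hprod, Wt]
    calc P {ω | ∀ t : ℕ, Y t ω ≠ 0}
        ≤ P (⋃ v : Fin (n + 1) → ℕ+, {ω | ∀ k ≤ n, Y k ω = e v k}) := measure_mono cover
    _ ≤ ∑' v : Fin (n + 1) → ℕ+, P {ω | ∀ k ≤ n, Y k ω = e v k} := measure_iUnion_le _
    _ = ∑' v : Fin (n + 1) → ℕ+, Wt ν n v := tsum_congr hcyl
    _ = ∑' v : Fin (n + 1) → ℕ+, Wt ν n v * (fun _ : ℕ+ => (1:ℝ≥0∞)) (v (Fin.last n)) := by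
          simp
    _ = ∑' j : ℕ+, Apath ν n j * 1 := tuple_sum ν n (fun _ => 1)
    _ = ∑' j : ℕ+, Apath ν n j * (1:ℝ≥0∞) ^ (j:ℕ) := by simp
    _ = (Fgen ν)^[n] 1 - (Fgen ν)^[n] 0 := GA_eq ν n 1 le_rfl
    _ = 1 - (Fgen ν)^[n] 0 := by rw [Fgen_iter_one]
  have h2 : ∀ n : ℕ, P {ω | ∀ t : ℕ, Y t ω ≠ 0} + (Fgen ν)^[n] 0 ≤ 1 := by
    intro n
    calc P {ω | ∀ t : ℕ, Y t ω ≠ 0} + (Fgen ν)^[n] 0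
        ≤ (1 - (Fgen ν)^[n] 0) + (Fgen ν)^[n] 0 := add_le_add_left (key n) _
    _ = 1 := tsub_add_cancel_of_le (Fgen_iter_le_one ν n zero_le)
  have h3 : P {ω | ∀ t : ℕ, Y t ω ≠ 0} + 1 ≤ 1 := by
    have hh : P {ω | ∀ t : ℕ, Y t ω ≠ 0} + (⨆ n, (Fgen ν)^[n] 0) ≤ 1 := by
      rw [ENNReal.add_iSup]; exact iSup_le h2
    rwa [iSup_iter ν hm h0] at hh
  have h4 := ENNReal.le_of_add_le_add_right ENNReal.one_ne_top
    (by simpa using h3 : P {ω | ∀ t : ℕ, Y t ω ≠ 0} + 1 ≤ 0 + 1)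
  simpa using h4
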